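/- Let $\sigma:\mathbb{R}\to(0,\infty)$ be continuous, $\rho\in(-1,1)$, $\bar\rho=\sqrt{1-\rho^2}$, $K$ a square-integrable Volterra kernel on $[0,1]^2$, and for $f$ in the Cameron–Martin space $H_0^1[0,1]$ set $\widehat f(s)=\int_0^s K(s,u)\dot f(u)du$. Define $I_1(x)=\inf_{f\in H_0^1[0,1]}\left[\frac{(x-\rho\int_0^1\sigma(\widehat f(s))\dot f(s)ds)^2}{2\bar\rho^2\int_0^1\sigma(\widehat f(s))^2ds}+\frac12\int_0^1\dot f(s)^2ds\right]$. Then $I_1(0)=0$, $I_1$ is non-decreasing on $[0,\infty)$, and non-increasing on $(-\infty,0]$. -/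

import Mathlib

open MeasureTheory Real

/-- The set over which the infimum defining the rate function is taken. -/
def RFset (σ : ℝ → ℝ) (ρ : ℝ) (K : ℝ → ℝ → ℝ) (x : ℝ) : Set ℝ :=
  { y : ℝ | ∃ φ : ℝ → ℝ,
      MemLp φ 2 (volume.restrict (Set.Ioc (0:ℝ) 1)) ∧
      y = (x - ρ * ∫ s in (0:ℝ)..1,
              σ (∫ u in (0:ℝ)..s, K s u * φ u) * φ s) ^ 2
            / (2 * (1 - ρ ^ 2)
              * ∫ s in (0:ℝ)..1, σ (∫ u in (0:ℝ)..s, K s u * φ u) ^ 2)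
          + (1/2) * ∫ s in (0:ℝ)..1, φ s ^ 2 }

lemma RFset_lb (σ : ℝ → ℝ) (ρ : ℝ) (hρ : ρ ∈ Set.Ioo (-1:ℝ) 1) (K : ℝ → ℝ → ℝ) (x : ℝ) :
    ∀ y ∈ RFset σ ρ K x, (0:ℝ) ≤ y := by
  have hρ2 : 0 < 1 - ρ ^ 2 := by nlinarith [hρ.1, hρ.2]
  rintro y ⟨φ, hφ, rfl⟩
  have h1 : (0:ℝ) ≤ ∫ s in (0:ℝ)..1, σ (∫ u in (0:ℝ)..s, K s u * φ u) ^ 2 :=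
    intervalIntegral.integral_nonneg zero_le_one (fun s _ => sq_nonneg _)
  have h2 : (0:ℝ) ≤ ∫ s in (0:ℝ)..1, φ s ^ 2 :=
    intervalIntegral.integral_nonneg zero_le_one (fun s _ => sq_nonneg _)
  have hden : (0:ℝ) ≤ 2 * (1 - ρ ^ 2) * ∫ s in (0:ℝ)..1, σ (∫ u in (0:ℝ)..s, K s u * φ u) ^ 2 :=
    mul_nonneg (by positivity) h1
  have := div_nonneg (sq_nonneg (x - ρ * ∫ s in (0:ℝ)..1,
      σ (∫ u in (0:ℝ)..s, K s u * φ u) * φ s)) hden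
  linarith

lemma RFset_mem_zero (σ : ℝ → ℝ) (ρ : ℝ) (K : ℝ → ℝ → ℝ) (x : ℝ) :
    x ^ 2 / (2 * (1 - ρ ^ 2) * σ 0 ^ 2) ∈ RFset σ ρ K x := by
  haveI : IsFiniteMeasure (volume.restrict (Set.Ioc (0:ℝ) 1)) := by
    constructor
    rw [Measure.restrict_apply_univ]
    simp [Real.volume_Ioc]
  refine ⟨fun _ => 0, memLp_const 0, ?_⟩
  simp

theorem rate_function_monotonicity
    (σ : ℝ → ℝ) (hσc : Continuous σ) (hσpos : ∀ x, 0 < σ x)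
    (ρ : ℝ) (hρ : ρ ∈ Set.Ioo (-1:ℝ) 1)
    (K : ℝ → ℝ → ℝ)
    (hKsq : MeasureTheory.IntegrableOn (fun p : ℝ × ℝ => K p.1 p.2 ^ 2)
      (Set.Icc 0 1 ×ˢ Set.Icc 0 1))
    (hKhat : ∀ φ : ℝ → ℝ, MemLp φ 2 (volume.restrict (Set.Ioc (0:ℝ) 1)) →
      Continuous fun s => ∫ u in (0:ℝ)..s, K s u * φ u)
    (I1 : ℝ → ℝ)
    (hI1 : ∀ x, I1 x = sInf { y : ℝ | ∃ φ : ℝ → ℝ,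
      MemLp φ 2 (volume.restrict (Set.Ioc (0:ℝ) 1)) ∧
      y = (x - ρ * ∫ s in (0:ℝ)..1,
              σ (∫ u in (0:ℝ)..s, K s u * φ u) * φ s) ^ 2
            / (2 * (1 - ρ ^ 2)
              * ∫ s in (0:ℝ)..1, σ (∫ u in (0:ℝ)..s, K s u * φ u) ^ 2)
          + (1/2) * ∫ s in (0:ℝ)..1, φ s ^ 2 }) :
    I1 0 = 0 ∧ MonotoneOn I1 (Set.Ici 0) ∧ AntitoneOn I1 (Set.Iic 0) := by
  have hρ2 : 0 < 1 - ρ ^ 2 := by nlinarith [hρ.1, hρ.2]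
  haveI : IsFiniteMeasure (volume.restrict (Set.Ioc (0:ℝ) 1)) := by
    constructor
    rw [Measure.restrict_apply_univ]
    simp [Real.volume_Ioc]
  have hI1' : ∀ x, I1 x = sInf (RFset σ ρ K x) := hI1
  have hlb := RFset_lb σ ρ hρ K
  have hne : ∀ x, (RFset σ ρ K x).Nonempty := fun x => ⟨_, RFset_mem_zero σ ρ K x⟩
  -- I1 0 = 0
  have h0mem : (0:ℝ) ∈ RFset σ ρ K 0 := by
    have := RFset_mem_zero σ ρ K 0
    simpa using this
  have hI0 : I1 0 = 0 := by
    rw [hI1' 0]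
    exact le_antisymm (csInf_le ⟨0, hlb 0⟩ h0mem) (le_csInf ⟨0, h0mem⟩ (hlb 0))
  -- the key comparison lemma
  have key : ∀ x x' : ℝ, x' ∈ Set.uIcc 0 x → I1 x' ≤ I1 x := by
    intro x x' hx'
    rw [hI1' x, hI1' x']
    refine le_csInf (hne x) ?_
    rintro y ⟨φ, hφ, rfl⟩
    -- notation
    set F : ℝ → ℝ := fun s => ∫ u in (0:ℝ)..s, K s u * φ u with hFdef
    have hFc : Continuous F := hKhat φ hφ
    have hσF : Continuous fun s => σ (F s) := hσc.comp hFc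
    have hσFsq : Continuous fun s => σ (F s) ^ 2 := hσF.pow 2
    have hφint : IntegrableOn φ (Set.Ioc (0:ℝ) 1) := hφ.integrable one_le_two
    have hφsq : IntegrableOn (fun s => φ s ^ 2) (Set.Ioc (0:ℝ) 1) := hφ.integrable_sq
    obtain ⟨M, hM⟩ := (isCompact_Icc (a := (0:ℝ)) (b := 1)).exists_bound_of_continuousOn
      hσF.continuousOn
    have hprod : IntegrableOn (fun s => σ (F s) * φ s) (Set.Ioc (0:ℝ) 1) := by
      refine Integrable.bdd_mul (c := M) hφint (hσF.aestronglyMeasurable.restrict) ?_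
      refine (ae_restrict_iff' measurableSet_Ioc).2 (ae_of_all _ fun s hs => ?_)
      exact hM s ⟨hs.1.le, hs.2⟩
    set P : ℝ → ℝ := fun r => ∫ s in (0:ℝ)..r, σ (F s) ^ 2 with hPdef
    set Q : ℝ → ℝ := fun r => ∫ s in (0:ℝ)..r, σ (F s) * φ s with hQdef
    set A : ℝ := ∫ s in (0:ℝ)..1, σ (F s) * φ s with hAdef
    set B : ℝ := ∫ s in (0:ℝ)..1, σ (F s) ^ 2 with hBdef
    have hBpos : 0 < B := intervalIntegral.intervalIntegral_pos_of_pos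
      (hσFsq.intervalIntegrable 0 1) (fun s => pow_pos (hσpos _) 2) zero_lt_one
    set z : ℝ := (x - ρ * A) / (Real.sqrt (1 - ρ ^ 2) * Real.sqrt B) with hzdef
    have hPcont : Continuous P :=
      intervalIntegral.continuous_primitive (fun a b => hσFsq.intervalIntegrable a b) 0
    have hQcont : ContinuousOn Q (Set.Icc 0 1) := by
      have h1 : IntegrableOn (fun s => σ (F s) * φ s) (Set.uIcc (0:ℝ) 1) := by
        rw [Set.uIcc_of_le zero_le_one]
        exact (integrableOn_Icc_iff_integrableOn_Ioc).2 hprod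
      have := intervalIntegral.continuousOn_primitive_interval h1
      rwa [Set.uIcc_of_le zero_le_one] at this
    set g : ℝ → ℝ := fun t => Real.sqrt (1 - ρ ^ 2) * Real.sqrt (P t) * z + ρ * Q t with hgdef
    have hgc : ContinuousOn g (Set.Icc 0 1) := by
      refine ContinuousOn.add ?_ (continuousOn_const.mul hQcont)
      exact (((continuous_const.mul
        (Real.continuous_sqrt.comp hPcont)).mul continuous_const)).continuousOn
    have hg0 : g 0 = 0 := by
      simp [hgdef, hPdef, hQdef, intervalIntegral.integral_same]
    have hg1 : g 1 = x := by
      have hP1 : P 1 = B := rfl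
      have hQ1 : Q 1 = A := rfl
      have hs1 : Real.sqrt (1 - ρ ^ 2) ≠ 0 := by positivity
      have hs2 : Real.sqrt B ≠ 0 := by positivity
      simp only [hgdef, hP1, hQ1, hzdef]
      field_simp
      ring
    -- intermediate value theorem
    have hIVT : x' ∈ g '' Set.uIcc 0 1 := by
      apply intermediate_value_uIcc (by rwa [Set.uIcc_of_le zero_le_one])
      rw [hg0, hg1]
      exact hx'
    obtain ⟨t, htmem, hgt⟩ := hIVT
    rw [Set.uIcc_of_le zero_le_one] at htmem
    obtain ⟨ht0, ht1⟩ := htmem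
    -- truncated control
    set φ' : ℝ → ℝ := Set.indicator (Set.Iic t) φ with hφ'def
    have hφ' : MemLp φ' 2 (volume.restrict (Set.Ioc (0:ℝ) 1)) :=
      hφ.indicator measurableSet_Iic
    set F' : ℝ → ℝ := fun s => ∫ u in (0:ℝ)..s, K s u * φ' u with hF'def
    have hF'c : Continuous F' := hKhat φ' hφ'
    have hσF' : Continuous fun s => σ (F' s) := hσc.comp hF'c
    have hσF'sq : Continuous fun s => σ (F' s) ^ 2 := hσF'.pow 2
    have hφ'int : IntegrableOn φ' (Set.Ioc (0:ℝ) 1) := hφint.indicator measurableSet_Iic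
    have hφ'sq : IntegrableOn (fun s => φ' s ^ 2) (Set.Ioc (0:ℝ) 1) := hφ'.integrable_sq
    obtain ⟨M', hM'⟩ := (isCompact_Icc (a := (0:ℝ)) (b := 1)).exists_bound_of_continuousOn
      hσF'.continuousOn
    have hprod' : IntegrableOn (fun s => σ (F' s) * φ' s) (Set.Ioc (0:ℝ) 1) := by
      refine Integrable.bdd_mul (c := M') hφ'int (hσF'.aestronglyMeasurable.restrict) ?_
      refine (ae_restrict_iff' measurableSet_Ioc).2 (ae_of_all _ fun s hs => ?_)
      exact hM' s ⟨hs.1.le, hs.2⟩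
    -- splitting the integrals at t
    have hsplit : ∀ f : ℝ → ℝ, IntegrableOn f (Set.Ioc (0:ℝ) 1) →
        (∫ s in (0:ℝ)..1, f s) = (∫ s in (0:ℝ)..t, f s) + ∫ s in t..1, f s := by
      intro f hf
      refine (intervalIntegral.integral_add_adjacent_intervals ?_ ?_).symm
      · exact (intervalIntegrable_iff_integrableOn_Ioc_of_le ht0).2
          (hf.mono_set (Set.Ioc_subset_Ioc le_rfl ht1))
      · exact (intervalIntegrable_iff_integrableOn_Ioc_of_le ht1).2
          (hf.mono_set (Set.Ioc_subset_Ioc ht0 le_rfl))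
    have hzero : ∀ f : ℝ → ℝ, (∀ s ∈ Set.Ioc t (1:ℝ), f s = 0) →
        (∫ s in t..1, f s) = 0 := by
      intro f hf
      rw [intervalIntegral.integral_of_le ht1,
        setIntegral_congr_fun measurableSet_Ioc hf]
      simp
    have hφ'val : ∀ u : ℝ, u ≤ t → φ' u = φ u := fun u hu => by
      simp only [hφ'def]; exact Set.indicator_of_mem (Set.mem_Iic.2 hu) φ
    have hφ'tail : ∀ s ∈ Set.Ioc t (1:ℝ), φ' s = 0 := fun s hs => by
      simp only [hφ'def]; exact Set.indicator_of_notMem (by simpa using hs.1) φ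
    -- F' agrees with F up to time t
    have hF'eq : ∀ s : ℝ, 0 ≤ s → s ≤ t → F' s = F s := by
      intro s h0 hst
      simp only [hF'def, hFdef]
      rw [intervalIntegral.integral_of_le h0, intervalIntegral.integral_of_le h0]
      refine setIntegral_congr_fun measurableSet_Ioc fun u hu => ?_
      rw [hφ'val u (hu.2.trans hst)]
    -- computing the three integrals for φ'
    have hA' : (∫ s in (0:ℝ)..1, σ (F' s) * φ' s) = Q t := by
      rw [hsplit _ hprod', hzero _ (fun s hs => by rw [hφ'tail s hs, mul_zero]), add_zero]
      rw [hQdef]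
      refine intervalIntegral.integral_congr fun s hs => ?_
      rw [Set.uIcc_of_le ht0] at hs
      rw [hF'eq s hs.1 hs.2, hφ'val s hs.2]
    set R : ℝ := ∫ s in t..1, σ (F' s) ^ 2 with hRdef
    have hR0 : 0 ≤ R := intervalIntegral.integral_nonneg ht1 (fun s _ => sq_nonneg _)
    have hB' : (∫ s in (0:ℝ)..1, σ (F' s) ^ 2) = P t + R := by
      rw [hsplit _ (hσF'sq.integrableOn_Icc.mono_set Set.Ioc_subset_Icc_self)]
      congr 1
      rw [hPdef]
      refine intervalIntegral.integral_congr fun s hs => ?_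
      rw [Set.uIcc_of_le ht0] at hs
      rw [hF'eq s hs.1 hs.2]
    have hPt0 : 0 ≤ P t := intervalIntegral.integral_nonneg ht0 (fun s _ => sq_nonneg _)
    have hB'pos : 0 < P t + R := by
      rw [← hB']
      exact intervalIntegral.intervalIntegral_pos_of_pos
        (hσF'sq.intervalIntegrable 0 1) (fun s => pow_pos (hσpos _) 2) zero_lt_one
    have hC' : (∫ s in (0:ℝ)..1, φ' s ^ 2) = ∫ s in (0:ℝ)..t, φ s ^ 2 := by
      rw [hsplit _ hφ'sq, hzero _ (fun s hs => by rw [hφ'tail s hs]; ring), add_zero]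
      refine intervalIntegral.integral_congr fun s hs => ?_
      rw [Set.uIcc_of_le ht0] at hs
      rw [hφ'val s hs.2]
    have hCle : (∫ s in (0:ℝ)..t, φ s ^ 2) ≤ ∫ s in (0:ℝ)..1, φ s ^ 2 := by
      rw [hsplit _ hφsq]
      have : (0:ℝ) ≤ ∫ s in t..1, φ s ^ 2 :=
        intervalIntegral.integral_nonneg ht1 (fun s _ => sq_nonneg _)
      linarith
    -- the candidate value
    refine le_trans (csInf_le ⟨0, hlb x'⟩ ⟨φ', hφ', rfl⟩) ?_
    rw [hA', hB', hC']
    -- from the IVT equation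
    have hxQ : x' - ρ * Q t = Real.sqrt (1 - ρ ^ 2) * Real.sqrt (P t) * z := by
      have := hgt
      simp only [hgdef] at this
      linarith
    have hsq : (x' - ρ * Q t) ^ 2 = (1 - ρ ^ 2) * P t * z ^ 2 := by
      rw [hxQ, mul_pow, mul_pow, Real.sq_sqrt hρ2.le, Real.sq_sqrt hPt0]
    have hz2 : z ^ 2 = (x - ρ * A) ^ 2 / ((1 - ρ ^ 2) * B) := by
      rw [hzdef, div_pow, mul_pow, Real.sq_sqrt hρ2.le, Real.sq_sqrt hBpos.le]
    have hterm1 : (x' - ρ * Q t) ^ 2 / (2 * (1 - ρ ^ 2) * (P t + R))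
        ≤ (x - ρ * A) ^ 2 / (2 * (1 - ρ ^ 2) * B) := by
      have hrhs : (x - ρ * A) ^ 2 / (2 * (1 - ρ ^ 2) * B) = z ^ 2 / 2 := by
        rw [hz2, div_div, show (1 - ρ ^ 2) * B * 2 = 2 * (1 - ρ ^ 2) * B by ring]
      rw [hsq, hrhs, div_le_div_iff₀ (by positivity) two_pos]
      nlinarith [mul_nonneg (mul_nonneg hρ2.le hR0) (sq_nonneg z)]
    have hterm2 : (1/2 : ℝ) * (∫ s in (0:ℝ)..t, φ s ^ 2)
        ≤ (1/2 : ℝ) * ∫ s in (0:ℝ)..1, φ s ^ 2 := by linarith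
    exact add_le_add hterm1 hterm2
  refine ⟨hI0, ?_, ?_⟩
  · intro a ha b hb hab
    exact key b a (by rw [Set.uIcc_of_le hb]; exact ⟨ha, hab⟩)
  · intro a ha b hb hab
    exact key a b (by rw [Set.uIcc_of_ge ha]; exact ⟨hab, hb⟩)
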